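/- Finite-horizon constrained LQR optimality: for every initial state z₀ ∈ ℝⁿ and every control sequence u₀, …, u_{N−1} ∈ ℝᵐ, with states generated by z_{k+1} = M(Az_k + Bu_k), the total cost ½ z_NᵀQz_N + ½ Σ_{k=0}^{N−1} (z_kᵀQz_k + u_kᵀRu_k) is at least ½ z₀ᵀP₀z₀, and equality holds if and only if u_k = −K_k z_k for all k = 0, …, N−1; in particular the feedback policy u_k = −K_k z_k is optimal and achieves cost ½ z₀ᵀP₀z₀. -/

import Mathlib

open Matrix

/-- `riccatiSeq A B C G Q R j` is the matrix `P_{N-j}` of the backward constrained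
Riccati recursion, i.e. the recursion indexed by the number of steps to go:
`riccatiSeq 0 = P_N = Q` and `riccatiSeq (j+1)` is the constrained Riccati update of
`riccatiSeq j`. -/
noncomputable def riccatiSeq {n m p : ℕ}
    (A : Matrix (Fin n) (Fin n) ℝ) (B : Matrix (Fin n) (Fin m) ℝ)
    (C : Matrix (Fin n) (Fin p) ℝ) (G : Matrix (Fin p) (Fin n) ℝ)
    (Q : Matrix (Fin n) (Fin n) ℝ) (R : Matrix (Fin m) (Fin m) ℝ) :
    ℕ → Matrix (Fin n) (Fin n) ℝ
  | 0 => Q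
  | j + 1 =>
      let M : Matrix (Fin n) (Fin n) ℝ := 1 - C * (G * C)⁻¹ * G
      let D : Matrix (Fin n) (Fin m) ℝ := B - C * (G * C)⁻¹ * (G * B)
      let P := riccatiSeq A B C G Q R j
      let K := (R + Dᵀ * P * D)⁻¹ * (Dᵀ * P * M * A)
      let L := (G * C)⁻¹ * (G * (A - B * K))
      let Abar := A - B * K - C * L
      Q + Kᵀ * R * K + Abarᵀ * P * Abar

/-- The feedback gain `K_k` of the backward constrained Riccati recursion, computed
from `P_{k+1} = riccatiSeq (N - (k+1))`. -/
noncomputable def riccatiGain {n m p : ℕ} (N : ℕ)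
    (A : Matrix (Fin n) (Fin n) ℝ) (B : Matrix (Fin n) (Fin m) ℝ)
    (C : Matrix (Fin n) (Fin p) ℝ) (G : Matrix (Fin p) (Fin n) ℝ)
    (Q : Matrix (Fin n) (Fin n) ℝ) (R : Matrix (Fin m) (Fin m) ℝ) (k : ℕ) :
    Matrix (Fin m) (Fin n) ℝ :=
  let M : Matrix (Fin n) (Fin n) ℝ := 1 - C * (G * C)⁻¹ * G
  let D : Matrix (Fin n) (Fin m) ℝ := B - C * (G * C)⁻¹ * (G * B)
  let P := riccatiSeq A B C G Q R (N - (k + 1))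
  (R + Dᵀ * P * D)⁻¹ * (Dᵀ * P * M * A)

namespace CLQR

open Matrix

variable {n m p : ℕ}
  (A : Matrix (Fin n) (Fin n) ℝ) (B : Matrix (Fin n) (Fin m) ℝ)
  (C : Matrix (Fin n) (Fin p) ℝ) (G : Matrix (Fin p) (Fin n) ℝ)
  (Q : Matrix (Fin n) (Fin n) ℝ) (R : Matrix (Fin m) (Fin m) ℝ)

noncomputable def gainOf (j : ℕ) : Matrix (Fin m) (Fin n) ℝ :=
  let M : Matrix (Fin n) (Fin n) ℝ := 1 - C * (G * C)⁻¹ * G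
  let D : Matrix (Fin n) (Fin m) ℝ := B - C * (G * C)⁻¹ * (G * B)
  let P := riccatiSeq A B C G Q R j
  (R + Dᵀ * P * D)⁻¹ * (Dᵀ * P * M * A)

noncomputable def abarOf (j : ℕ) : Matrix (Fin n) (Fin n) ℝ :=
  let K := gainOf A B C G Q R j
  A - B * K - C * ((G * C)⁻¹ * (G * (A - B * K)))

lemma gainOf_eq (j : ℕ) :
    gainOf A B C G Q R j =
      (R + (B - C * (G * C)⁻¹ * (G * B))ᵀ * riccatiSeq A B C G Q R j *
          (B - C * (G * C)⁻¹ * (G * B)))⁻¹ *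
        ((B - C * (G * C)⁻¹ * (G * B))ᵀ * riccatiSeq A B C G Q R j *
          (1 - C * (G * C)⁻¹ * G) * A) := rfl

lemma abarOf_eq (j : ℕ) :
    abarOf A B C G Q R j =
      A - B * gainOf A B C G Q R j -
        C * ((G * C)⁻¹ * (G * (A - B * gainOf A B C G Q R j))) := rfl

lemma riccatiSeq_succ (j : ℕ) :
    riccatiSeq A B C G Q R (j + 1) =
      Q + (gainOf A B C G Q R j)ᵀ * R * gainOf A B C G Q R j +
        (abarOf A B C G Q R j)ᵀ * riccatiSeq A B C G Q R j * abarOf A B C G Q R j := rfl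

lemma riccatiGain_eq {N k : ℕ} :
    riccatiGain N A B C G Q R k = gainOf A B C G Q R (N - (k + 1)) := rfl

lemma riccatiSeq_posSemidef (hQ : Q.PosSemidef) (hR : R.PosDef) (j : ℕ) :
    (riccatiSeq A B C G Q R j).PosSemidef := by
  induction j with
  | zero => exact hQ
  | succ j ih =>
    rw [riccatiSeq_succ]
    have h1 := hR.posSemidef.conjTranspose_mul_mul_same (gainOf A B C G Q R j)
    have h2 := ih.conjTranspose_mul_mul_same (abarOf A B C G Q R j)
    rw [conjTranspose_eq_transpose_of_trivial] at h1 h2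
    exact (hQ.add h1).add h2

lemma S_posDef (hQ : Q.PosSemidef) (hR : R.PosDef) (j : ℕ) :
    (R + (B - C * (G * C)⁻¹ * (G * B))ᵀ * riccatiSeq A B C G Q R j *
        (B - C * (G * C)⁻¹ * (G * B))).PosDef := by
  have h := (riccatiSeq_posSemidef A B C G Q R hQ hR j).conjTranspose_mul_mul_same
    (B - C * (G * C)⁻¹ * (G * B))
  rw [conjTranspose_eq_transpose_of_trivial] at h
  exact hR.add_posSemidef h

lemma dp_left {ι κ : Type*} [Fintype ι] [Fintype κ] (E : Matrix ι κ ℝ) (x : κ → ℝ) (y : ι → ℝ) :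
    (E *ᵥ x) ⬝ᵥ y = x ⬝ᵥ (Eᵀ *ᵥ y) := by
  rw [Matrix.dotProduct_mulVec, Matrix.vecMul_transpose]



lemma step (hGC : IsUnit (G * C)) (hQ : Q.PosSemidef) (hR : R.PosDef) (j : ℕ)
    (z : Fin n → ℝ) (u : Fin m → ℝ) :
    z ⬝ᵥ (Q *ᵥ z) + u ⬝ᵥ (R *ᵥ u) +
        ((1 - C * (G * C)⁻¹ * G) *ᵥ (A *ᵥ z + B *ᵥ u)) ⬝ᵥ
          (riccatiSeq A B C G Q R j *ᵥ ((1 - C * (G * C)⁻¹ * G) *ᵥ (A *ᵥ z + B *ᵥ u)))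
      = z ⬝ᵥ (riccatiSeq A B C G Q R (j + 1) *ᵥ z) +
          (u + gainOf A B C G Q R j *ᵥ z) ⬝ᵥ
            ((R + (B - C * (G * C)⁻¹ * (G * B))ᵀ * riccatiSeq A B C G Q R j *
                (B - C * (G * C)⁻¹ * (G * B))) *ᵥ (u + gainOf A B C G Q R j *ᵥ z)) := by
  set M : Matrix (Fin n) (Fin n) ℝ := 1 - C * (G * C)⁻¹ * G with hMdef
  set D : Matrix (Fin n) (Fin m) ℝ := B - C * (G * C)⁻¹ * (G * B) with hDdef
  set P := riccatiSeq A B C G Q R j with hPdef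
  set K := gainOf A B C G Q R j with hKdef
  set Abar := abarOf A B C G Q R j with hAbardef
  have hP := riccatiSeq_posSemidef A B C G Q R hQ hR j
  have hPt : Pᵀ = P := by
    rw [← conjTranspose_eq_transpose_of_trivial]; exact hP.1
  have hRt : Rᵀ = R := by
    rw [← conjTranspose_eq_transpose_of_trivial]; exact hR.1
  have hS := S_posDef A B C G Q R hQ hR j
  have hdet : IsUnit (R + Dᵀ * P * D).det := by
    rw [← Matrix.isUnit_iff_isUnit_det]
    exact hS.isUnit
  have hSK : (R + Dᵀ * P * D) * K = Dᵀ * P * M * A := by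
    rw [hKdef, gainOf_eq, ← hMdef, ← hDdef, ← hPdef, ← Matrix.mul_assoc,
      Matrix.mul_nonsing_inv _ hdet, Matrix.one_mul]
  have hAbar : Abar = A - B * K - C * ((G * C)⁻¹ * (G * (A - B * K))) := abarOf_eq ..
  have hMB : M * B = D := by
    rw [hMdef, hDdef]
    simp only [Matrix.sub_mul, Matrix.mul_sub, Matrix.add_mul, Matrix.mul_add,
      Matrix.one_mul, Matrix.mul_one, Matrix.mul_assoc]
  have hMA : M * A = Abar + D * K := by
    rw [hMdef, hDdef, hAbar]
    simp only [Matrix.sub_mul, Matrix.mul_sub, Matrix.add_mul, Matrix.mul_add,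
      Matrix.one_mul, Matrix.mul_one, Matrix.mul_assoc]
    abel
  have hcross : Dᵀ * (P * Abar) = R * K := by
    have h1 : Abar = M * A - D * K := by rw [hMA]; abel
    have h2 : Dᵀ * P * M * A = (R + Dᵀ * P * D) * K := hSK.symm
    have h3 : Dᵀ * (P * (M * A)) = R * K + Dᵀ * (P * (D * K)) := by
      calc Dᵀ * (P * (M * A)) = Dᵀ * P * M * A := by simp only [Matrix.mul_assoc]
        _ = (R + Dᵀ * P * D) * K := h2
        _ = R * K + Dᵀ * (P * (D * K)) := by simp only [Matrix.add_mul, Matrix.mul_assoc]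
    rw [h1, Matrix.mul_sub, Matrix.mul_sub, h3]
    abel
  have hcross' : Abarᵀ * (P * D) = Kᵀ * R := by
    calc Abarᵀ * (P * D) = (Dᵀ * (P * Abar))ᵀ := by
          simp [Matrix.transpose_mul, hPt, Matrix.mul_assoc]
      _ = (R * K)ᵀ := by rw [hcross]
      _ = Kᵀ * R := by simp [Matrix.transpose_mul, hRt]
  have hx : M *ᵥ (A *ᵥ z + B *ᵥ u) = Abar *ᵥ z + D *ᵥ (u + K *ᵥ z) := by
    calc M *ᵥ (A *ᵥ z + B *ᵥ u) = (M * A) *ᵥ z + (M * B) *ᵥ u := by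
          rw [Matrix.mulVec_add, Matrix.mulVec_mulVec, Matrix.mulVec_mulVec]
      _ = (Abar + D * K) *ᵥ z + D *ᵥ u := by rw [hMA, hMB]
      _ = Abar *ᵥ z + D *ᵥ (u + K *ᵥ z) := by
          rw [Matrix.add_mulVec, Matrix.mulVec_add, Matrix.mulVec_mulVec]; abel
  have main : ∀ v : Fin m → ℝ,
      z ⬝ᵥ (Q *ᵥ z) + (v - K *ᵥ z) ⬝ᵥ (R *ᵥ (v - K *ᵥ z)) +
          (Abar *ᵥ z + D *ᵥ v) ⬝ᵥ (P *ᵥ (Abar *ᵥ z + D *ᵥ v))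
        = z ⬝ᵥ (riccatiSeq A B C G Q R (j + 1) *ᵥ z) +
            v ⬝ᵥ ((R + Dᵀ * P * D) *ᵥ v) := by
    intro v
    rw [riccatiSeq_succ, ← hPdef, ← hKdef, ← hAbardef]
    simp only [Matrix.mulVec_add, Matrix.mulVec_sub, Matrix.add_mulVec, Matrix.sub_mulVec,
      dotProduct_add, dotProduct_sub, add_dotProduct, sub_dotProduct, dp_left,
      Matrix.mulVec_mulVec, Matrix.mul_assoc]
    rw [hcross, hcross']
    ring
  have hv := main (u + K *ᵥ z)
  have hu : u + K *ᵥ z - K *ᵥ z = u := by abel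
  rw [hu] at hv
  rw [hx]
  exact hv



lemma cost_aux (hGC : IsUnit (G * C)) (hQ : Q.PosSemidef) (hR : R.PosDef) :
    ∀ (j : ℕ) (z : ℕ → Fin n → ℝ) (u : ℕ → Fin m → ℝ),
      (∀ k < j, z (k + 1) = (1 - C * (G * C)⁻¹ * G) *ᵥ (A *ᵥ z k + B *ᵥ u k)) →
      ((1 / 2) * (z j ⬝ᵥ (Q *ᵥ z j)) +
          (1 / 2) * ∑ k ∈ Finset.range j, (z k ⬝ᵥ (Q *ᵥ z k) + u k ⬝ᵥ (R *ᵥ u k)) ≥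
        (1 / 2) * (z 0 ⬝ᵥ (riccatiSeq A B C G Q R j *ᵥ z 0))) ∧
      ((1 / 2) * (z j ⬝ᵥ (Q *ᵥ z j)) +
          (1 / 2) * ∑ k ∈ Finset.range j, (z k ⬝ᵥ (Q *ᵥ z k) + u k ⬝ᵥ (R *ᵥ u k)) =
        (1 / 2) * (z 0 ⬝ᵥ (riccatiSeq A B C G Q R j *ᵥ z 0)) ↔
          ∀ k < j, u k = -(gainOf A B C G Q R (j - (k + 1)) *ᵥ z k)) := by
  intro j
  induction j with
  | zero =>
    intro z u _
    constructor
    · simp [riccatiSeq]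
    · simp [riccatiSeq]
  | succ j ih =>
    intro z u hrec
    obtain ⟨ih1, ih2⟩ := ih (fun k => z (k + 1)) (fun k => u (k + 1))
      (fun k hk => hrec (k + 1) (by omega))
    have h1 : z 1 = (1 - C * (G * C)⁻¹ * G) *ᵥ (A *ᵥ z 0 + B *ᵥ u 0) := hrec 0 (by omega)
    have hstep := step A B C G Q R hGC hQ hR j (z 0) (u 0)
    rw [← h1] at hstep
    set K := gainOf A B C G Q R j with hKdef
    set S := R + (B - C * (G * C)⁻¹ * (G * B))ᵀ * riccatiSeq A B C G Q R j *
      (B - C * (G * C)⁻¹ * (G * B)) with hSdef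
    set v := u 0 + K *ᵥ z 0 with hvdef
    have hS : S.PosDef := S_posDef A B C G Q R hQ hR j
    have hvnonneg : 0 ≤ v ⬝ᵥ (S *ᵥ v) := by
      have := hS.posSemidef.dotProduct_mulVec_nonneg v
      simpa using this
    have hzero : v ⬝ᵥ (S *ᵥ v) = 0 ↔ u 0 = -(K *ᵥ z 0) := by
      constructor
      · intro h0
        by_contra hne
        have hvne : v ≠ 0 := by
          intro hv0
          exact hne (eq_neg_of_add_eq_zero_left hv0)
        have := hS.dotProduct_mulVec_pos hvne
        simp only [star_trivial] at this
        linarith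
      · intro h0
        have : v = 0 := by rw [hvdef, h0]; abel
        simp [this]
    have hsum : ∑ k ∈ Finset.range (j + 1), (z k ⬝ᵥ (Q *ᵥ z k) + u k ⬝ᵥ (R *ᵥ u k)) =
        (∑ k ∈ Finset.range j, (z (k + 1) ⬝ᵥ (Q *ᵥ z (k + 1)) + u (k + 1) ⬝ᵥ (R *ᵥ u (k + 1)))) +
          (z 0 ⬝ᵥ (Q *ᵥ z 0) + u 0 ⬝ᵥ (R *ᵥ u 0)) := Finset.sum_range_succ' _ j
    have hz01 : z (0 + 1) = z 1 := rfl
    rw [hz01] at ih1 ih2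
    constructor
    · rw [hsum]
      linarith [ih1, hvnonneg, hstep]
    · rw [hsum]
      constructor
      · intro hE
        have ha : (1 / 2) * (z (j + 1) ⬝ᵥ (Q *ᵥ z (j + 1))) +
            (1 / 2) * ∑ k ∈ Finset.range j,
              (z (k + 1) ⬝ᵥ (Q *ᵥ z (k + 1)) + u (k + 1) ⬝ᵥ (R *ᵥ u (k + 1))) =
            (1 / 2) * (z 1 ⬝ᵥ (riccatiSeq A B C G Q R j *ᵥ z 1)) := by
          linarith [ih1, hvnonneg, hstep, hE]
        have hb : v ⬝ᵥ (S *ᵥ v) = 0 := by linarith [ih1, hstep, hE]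
        have htail := ih2.mp ha
        intro k hk
        match k with
        | 0 =>
          simpa [hKdef] using hzero.mp hb
        | (k' + 1) =>
          have hk' : k' < j := by omega
          have := htail k' hk'
          simpa [Nat.succ_sub_succ] using this
      · intro hfb
        have h0 : u 0 = -(K *ᵥ z 0) := by
          have := hfb 0 (by omega)
          simpa [hKdef] using this
        have hb : v ⬝ᵥ (S *ᵥ v) = 0 := hzero.mpr h0
        have htail : ∀ k < j, u (k + 1) =
            -(gainOf A B C G Q R (j - (k + 1)) *ᵥ z (k + 1)) := by
          intro k hk
          have := hfb (k + 1) (by omega)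
          simpa [Nat.succ_sub_succ] using this
        have ha := ih2.mpr htail
        linarith [ha, hb, hstep]



end CLQR

/-- Finite-horizon constrained LQR optimality: for every initial state `z 0` and
every control sequence `u`, with states generated by `z (k+1) = M (A z k + B u k)`,
the total cost is at least `½ z₀ᵀ P₀ z₀` (where `P₀ = riccatiSeq N`), with equality
iff `u k = -K_k (z k)` for all `k < N`; in particular the feedback policy
`u k = -K_k (z k)` is optimal and achieves cost `½ z₀ᵀ P₀ z₀`. -/
theorem constrained_lqr_optimality {n m p N : ℕ} (hN : 1 ≤ N)
    (A : Matrix (Fin n) (Fin n) ℝ) (B : Matrix (Fin n) (Fin m) ℝ)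
    (C : Matrix (Fin n) (Fin p) ℝ) (G : Matrix (Fin p) (Fin n) ℝ)
    (hGC : IsUnit (G * C))
    (M : Matrix (Fin n) (Fin n) ℝ)
    (hM : M = 1 - C * (G * C)⁻¹ * G)
    (D : Matrix (Fin n) (Fin m) ℝ)
    (hD : D = B - C * (G * C)⁻¹ * (G * B))
    (Q : Matrix (Fin n) (Fin n) ℝ) (hQ : Q.PosSemidef)
    (R : Matrix (Fin m) (Fin m) ℝ) (hR : R.PosDef) :
    ∀ (z₀ : Fin n → ℝ) (u : ℕ → Fin m → ℝ) (z : ℕ → Fin n → ℝ),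
      z 0 = z₀ →
      (∀ k < N, z (k + 1) = M *ᵥ (A *ᵥ z k + B *ᵥ u k)) →
      ((1 / 2) * (z N ⬝ᵥ (Q *ᵥ z N)) +
          (1 / 2) * ∑ k ∈ Finset.range N, (z k ⬝ᵥ (Q *ᵥ z k) + u k ⬝ᵥ (R *ᵥ u k)) ≥
        (1 / 2) * (z₀ ⬝ᵥ (riccatiSeq A B C G Q R N *ᵥ z₀))) ∧
      ((1 / 2) * (z N ⬝ᵥ (Q *ᵥ z N)) +
          (1 / 2) * ∑ k ∈ Finset.range N, (z k ⬝ᵥ (Q *ᵥ z k) + u k ⬝ᵥ (R *ᵥ u k)) =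
        (1 / 2) * (z₀ ⬝ᵥ (riccatiSeq A B C G Q R N *ᵥ z₀)) ↔
          ∀ k < N, u k = -(riccatiGain N A B C G Q R k *ᵥ z k)) := by
  subst hM hD
  intro z₀ u z hz0 hrec
  subst hz0
  obtain ⟨h1, h2⟩ := CLQR.cost_aux A B C G Q R hGC hQ hR N z u hrec
  refine ⟨h1, ?_⟩
  simpa only [CLQR.riccatiGain_eq] using h2
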